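/- Let F be a finite field of cardinality c, let m, n be positive integers, and let A ∈ M_{m×n}(F) be a matrix of rank r with r ≥ 2. Then there exists an adjacent set V ⊆ M_{m×n}(F) of cardinality c^{r−1} all of whose elements have rank r−1 and are adjacent to A. -/

import Mathlib

open Matrix

variable {D : Type*} [DivisionRing D]

/-- The rank of a matrix over a division ring: the dimension of its row space,
i.e. of the left `D`-subspace of `D^n` spanned by the rows. -/
noncomputable def rowRank {m n : ℕ} (A : Matrix (Fin m) (Fin n) D) : ℕ :=
  Module.finrank D (Submodule.span D (Set.range fun i => A i))

/-- Two matrices are adjacent if their difference has rank one. -/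
def Adjacent {m n : ℕ} (A B : Matrix (Fin m) (Fin n) D) : Prop :=
  rowRank (A - B) = 1

/-- `R(x)`: the set of matrices of the form `ᵗu x` for a fixed row vector `x`. -/
def Rvec {m n : ℕ} (x : Fin n → D) : Set (Matrix (Fin m) (Fin n) D) :=
  { M | ∃ u : Fin m → D, ∀ i j, M i j = u i * x j }

/-- `L(ᵗy)`: the set of matrices of the form `ᵗy v` for a fixed column vector `ᵗy`. -/
def Lvec {m n : ℕ} (y : Fin m → D) : Set (Matrix (Fin m) (Fin n) D) :=
  { M | ∃ v : Fin n → D, ∀ i j, M i j = y i * v j }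

/-- `R_d`: the matrices whose row space is contained in `d`. -/
def Rsub {m n : ℕ} (d : Submodule D (Fin n → D)) : Set (Matrix (Fin m) (Fin n) D) :=
  { M | ∀ i, M i ∈ d }

/-- `L_e`: the matrices whose column space (a right subspace, i.e. a `Dᵐᵒᵖ`-submodule)
is contained in `e`. -/
def Lsub {m n : ℕ} (e : Submodule Dᵐᵒᵖ (Fin m → D)) : Set (Matrix (Fin m) (Fin n) D) :=
  { M | ∀ j, (fun i => M i j) ∈ e }

/-- The orthogonal set of a set `e` of column vectors. -/
def perpSet {m : ℕ} (e : Set (Fin m → D)) : Set (Fin m → D) :=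
  { u | ∀ v ∈ e, ∑ i, u i * v i = 0 }

/-- The `p × q` matrix with upper-left block `B` and zeros elsewhere. -/
def pad {m n : ℕ} (p q : ℕ) (B : Matrix (Fin m) (Fin n) D) :
    Matrix (Fin p) (Fin q) D :=
  Matrix.of fun i j =>
    if hi : (i : ℕ) < m then if hj : (j : ℕ) < n then B ⟨i, hi⟩ ⟨j, hj⟩ else 0 else 0

/-- `φ` is degenerate with respect to `A`. -/
def DegenerateAt {m n p q : ℕ} (φ : Matrix (Fin m) (Fin n) D → Matrix (Fin p) (Fin q) D)
    (A : Matrix (Fin m) (Fin n) D) : Prop :=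
  ∃ x : Fin p → D, x ≠ 0 ∧ ∃ y : Fin q → D, y ≠ 0 ∧
    ∀ M : Matrix (Fin m) (Fin n) D, rowRank M ≤ 1 →
      φ (A + M) - φ A ∈ Rvec y ∪ Lvec x

/-- `φ` is degenerate: degenerate with respect to every matrix. -/
def Degenerate {m n p q : ℕ} (φ : Matrix (Fin m) (Fin n) D → Matrix (Fin p) (Fin q) D) :
    Prop :=
  ∀ A, DegenerateAt φ A

/-- A map (sending `0` to `0`) is degenerate with respect to `0` iff it maps every matrix of
rank at most one into `R(y) ∪ L(ᵗx)` for some nonzero `y`, `x`. -/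
def DegZero {m n p q : ℕ} (φ : Matrix (Fin m) (Fin n) D → Matrix (Fin p) (Fin q) D) :
    Prop :=
  ∃ x : Fin p → D, x ≠ 0 ∧ ∃ y : Fin q → D, y ≠ 0 ∧
    ∀ M : Matrix (Fin m) (Fin n) D, rowRank M ≤ 1 → φ M ∈ Rvec y ∪ Lvec x

/-- A standard adjacency preserver. -/
def Standard {m n p q : ℕ} (φ : Matrix (Fin m) (Fin n) D → Matrix (Fin p) (Fin q) D) :
    Prop :=
  (m ≤ p ∧ n ≤ q ∧ ∃ τ : D ≃+* D, ∃ T : Matrix (Fin p) (Fin p) D,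
    ∃ S : Matrix (Fin q) (Fin q) D, ∃ R : Matrix (Fin p) (Fin q) D,
    IsUnit T ∧ IsUnit S ∧ ∀ A, φ A = T * pad p q (A.map τ) * S + R) ∨
  (n ≤ p ∧ m ≤ q ∧ ∃ σ : D → D, Function.Bijective σ ∧ σ 1 = 1 ∧
    (∀ a b, σ (a + b) = σ a + σ b) ∧ (∀ a b, σ (a * b) = σ b * σ a) ∧
    ∃ T : Matrix (Fin p) (Fin p) D, ∃ S : Matrix (Fin q) (Fin q) D,
    ∃ R : Matrix (Fin p) (Fin q) D, IsUnit T ∧ IsUnit S ∧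
    ∀ A, φ A = T * pad p q (A.map σ).transpose * S + R)

/-- A division ring is EAS if every (unital) ring endomorphism of it is surjective. -/
def EAS (D : Type*) [DivisionRing D] : Prop :=
  ∀ f : D →+* D, Function.Surjective f

/-- A set of matrices is adjacent if any two distinct members are adjacent. -/
def IsAdjacentSet {m n : ℕ} (S : Set (Matrix (Fin m) (Fin n) D)) : Prop :=
  ∀ A ∈ S, ∀ B ∈ S, A ≠ B → Adjacent A B


private lemma rowRank_eq_one_of {m n : ℕ} {F : Type*} [Field F]
    (u : Fin m → F) (v : Fin n → F) (hu : u ≠ 0) (hv : v ≠ 0)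
    (B : Matrix (Fin m) (Fin n) F) (hB : ∀ i j, B i j = u i * v j) :
    rowRank B = 1 := by
  have hrow : ∀ i, B i = u i • v := by
    intro i; funext j; simp [hB, Pi.smul_apply, smul_eq_mul]
  have hspan : Submodule.span F (Set.range fun i => B i) = Submodule.span F {v} := by
    apply le_antisymm
    · rw [Submodule.span_le]
      rintro _ ⟨i, rfl⟩
      show B i ∈ _
      rw [hrow]
      exact Submodule.smul_mem _ _ (Submodule.mem_span_singleton_self v)
    · rw [Submodule.span_le, Set.singleton_subset_iff]
      obtain ⟨i, hi⟩ := Function.ne_iff.mp hu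
      have hv' : v = (u i)⁻¹ • B i := by
        rw [hrow, smul_smul, inv_mul_cancel₀ hi, one_smul]
      rw [hv']
      exact Submodule.smul_mem _ _ (Submodule.subset_span ⟨i, rfl⟩)
  rw [rowRank, hspan]
  exact finrank_span_singleton hv

/-- Lemma 4.1. -/
theorem stmt16 {F : Type*} [Field F] [Fintype F] (m n : ℕ) (hm : 0 < m) (hn : 0 < n)
    (A : Matrix (Fin m) (Fin n) F) (r : ℕ) (hr : 2 ≤ r) (hA : rowRank A = r) :
    ∃ V : Set (Matrix (Fin m) (Fin n) F),
      IsAdjacentSet V ∧ V.ncard = Fintype.card F ^ (r - 1) ∧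
      ∀ M ∈ V, rowRank M = r - 1 ∧ Adjacent M A := by
  classical
  haveI : NeZero r := ⟨by omega⟩
  set R : Submodule F (Fin n → F) := Submodule.span F (Set.range fun i => A i) with hR
  have hfin : Module.finrank F R = r := hA
  -- a basis of the row space
  let B : Module.Basis (Fin r) F R := Module.finBasisOfFinrankEq F R hfin
  let b : Fin r → (Fin n → F) := fun k => (B k : Fin n → F)
  have hb_li : LinearIndependent F b :=
    B.linearIndependent.map' R.subtype R.ker_subtype
  have hmem : ∀ i, A i ∈ R := fun i => Submodule.subset_span ⟨i, rfl⟩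
  let ρ : Fin m → R := fun i => ⟨A i, hmem i⟩
  let c : Fin m → Fin r → F := fun i => B.equivFun (ρ i)
  have hdecomp : ∀ i, A i = ∑ k, c i k • b k := by
    intro i
    have h1 := B.sum_repr (ρ i)
    have h2 : ((∑ k, B.repr (ρ i) k • B k : R) : Fin n → F) = A i := by rw [h1]
    rw [← h2]
    simp [c, b, Module.Basis.equivFun_apply]
    conv_lhs => rw [← h1]
    rw [Submodule.coe_sum]
    simp only [Submodule.coe_smul]
  have hc_top : Submodule.span F (Set.range c) = (⊤ : Submodule F (Fin r → F)) := by
    have h1 : Submodule.span F (Set.range ρ) = ⊤ := by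
      apply Submodule.map_injective_of_injective R.injective_subtype
      rw [Submodule.map_span, Submodule.map_top, Submodule.range_subtype, ← Set.range_comp]
      exact hR.symm
    have h2 : Set.range c = ⇑(B.equivFun.toLinearMap) '' Set.range ρ := by
      rw [← Set.range_comp]; rfl
    rw [h2, ← Submodule.map_span, h1, Submodule.map_top, LinearEquiv.range]
  let emb : Fin (r - 1) → Fin r := fun k => ⟨k.1 + 1, by have := k.2; omega⟩
  have hemb_inj : Function.Injective emb := by
    intro a b h
    have : a.1 + 1 = b.1 + 1 := congrArg Fin.val h
    exact Fin.ext (by omega)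
  have hemb_ne : ∀ k, emb k ≠ 0 := by
    intro k h
    have := congrArg Fin.val h
    simp [emb] at this
  let W' : Submodule F (Fin n → F) := Submodule.span F (Set.range (b ∘ emb))
  have hW'rank : Module.finrank F W' = r - 1 := by
    have hli := hb_li.comp emb hemb_inj
    simpa using finrank_span_eq_card hli
  let w : (Fin (r - 1) → F) → (Fin n → F) := fun t => ∑ k, t k • b (emb k)
  have hw_mem : ∀ t, w t ∈ W' := fun t =>
    Submodule.sum_mem _ fun k _ => Submodule.smul_mem _ _ (Submodule.subset_span ⟨k, rfl⟩)
  have hbk_mem : ∀ k : Fin r, k ≠ 0 → b k ∈ W' := by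
    intro k hk
    have hk' : (k : ℕ) ≠ 0 := fun h => hk (Fin.ext (by simpa using h))
    have he : emb ⟨k.1 - 1, by have := k.2; omega⟩ = k := by
      apply Fin.ext
      simp [emb]
      omega
    rw [← he]
    exact Submodule.subset_span ⟨_, rfl⟩
  let Mt : (Fin (r - 1) → F) → Matrix (Fin m) (Fin n) F :=
    fun t => Matrix.of fun i j => A i j - c i 0 * (b 0 j - w t j)
  have hMrow : ∀ t i, (Mt t) i = A i - c i 0 • (b 0 - w t) := by
    intro t i; funext j
    simp [Mt, Pi.smul_apply, Pi.sub_apply, mul_sub]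
  have hu : (fun i => c i 0) ≠ 0 := by
    intro h0
    have hRW : R ≤ W' := by
      rw [hR, Submodule.span_le]
      rintro _ ⟨i, rfl⟩
      show A i ∈ W'
      rw [hdecomp i]
      apply Submodule.sum_mem
      intro k _
      by_cases hk : k = 0
      · subst hk
        have hc0 : c i 0 = 0 := congrFun h0 i
        rw [hc0, zero_smul]
        exact Submodule.zero_mem _
      · exact Submodule.smul_mem _ _ (hbk_mem k hk)
    have hle := Submodule.finrank_mono hRW
    rw [hfin, hW'rank] at hle
    omega
  have hv_ne : ∀ t, b 0 - w t ≠ 0 := by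
    intro t h
    have hb0 : b 0 = w t := by rwa [sub_eq_zero] at h
    have h0 : b 0 ∉ Submodule.span F (b '' Set.range emb) := by
      apply hb_li.notMem_span_image
      rintro ⟨k, hk⟩
      exact hemb_ne k hk
    apply h0
    rw [← Set.range_comp, hb0]
    exact hw_mem t
  have hMspan : ∀ t, Submodule.span F (Set.range fun i => (Mt t) i) = W' := by
    intro t
    set g : Fin r → (Fin n → F) := fun k => if k = 0 then w t else b k with hg
    have key : ∀ i : Fin m, ∑ k, c i k • g k - ∑ k, c i k • b k = c i 0 • w t - c i 0 • b 0 := by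
      intro i
      rw [← Finset.sum_sub_distrib, Finset.sum_eq_single (0 : Fin r)]
      · simp [hg]
      · intro k _ hk; simp [hg, hk]
      · intro h; exact absurd (Finset.mem_univ _) h
    have hrow : (fun i => (Mt t) i) = fun i => Fintype.linearCombination F g (c i) := by
      funext i
      rw [hMrow t i, Fintype.linearCombination_apply, hdecomp i, smul_sub,
        show (∑ k, c i k • g k) = (∑ k, c i k • b k) + (c i 0 • w t - c i 0 • b 0) from by
          rw [← key i]; abel]
      abel
    rw [hrow,
      show Set.range (fun i => Fintype.linearCombination F g (c i))
          = ⇑(Fintype.linearCombination F g) '' Set.range c from by rw [← Set.range_comp]; rfl,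
      ← Submodule.map_span, hc_top, Submodule.map_top, Fintype.range_linearCombination]
    apply le_antisymm
    · rw [Submodule.span_le]
      rintro _ ⟨k, rfl⟩
      by_cases hk : k = 0
      · subst hk; simpa [hg] using hw_mem t
      · simpa [hg, hk] using hbk_mem k hk
    · rw [Submodule.span_le]
      rintro _ ⟨k, rfl⟩
      refine Submodule.subset_span ⟨emb k, ?_⟩
      show g (emb k) = (b ∘ emb) k
      simp [hg, hemb_ne k]
  have hMrank : ∀ t, rowRank (Mt t) = r - 1 := by
    intro t
    rw [rowRank, hMspan t]
    exact hW'rank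
  have hAdjA : ∀ t, Adjacent (Mt t) A := by
    intro t
    have hv' : w t - b 0 ≠ 0 := fun h =>
      hv_ne t (by rw [sub_eq_zero] at h ⊢; exact h.symm)
    exact rowRank_eq_one_of (fun i => c i 0) (w t - b 0) hu hv' _
      (by intro i j; simp [Mt, Pi.sub_apply]; ring)
  have hw_inj : Function.Injective w := by
    intro t t' h
    have hli := hb_li.comp emb hemb_inj
    have hsum : ∑ k, (t k - t' k) • (b ∘ emb) k = 0 := by
      simp only [sub_smul, Finset.sum_sub_distrib, Function.comp_apply]
      rw [show (∑ k, t k • b (emb k)) = w t from rfl, show (∑ k, t' k • b (emb k)) = w t' from rfl,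
        h, sub_self]
    funext k
    have := Fintype.linearIndependent_iff.mp hli _ hsum k
    exact sub_eq_zero.mp this
  have hM_winj : ∀ t t', Mt t = Mt t' → w t = w t' := by
    intro t t' h
    obtain ⟨i, hi⟩ := Function.ne_iff.mp hu
    funext j
    have he : A i j - c i 0 * (b 0 j - w t j) = A i j - c i 0 * (b 0 j - w t' j) :=
      congrFun (congrFun h i) j
    have he2 : c i 0 * (b 0 j - w t j) = c i 0 * (b 0 j - w t' j) := sub_right_injective he
    have he3 : b 0 j - w t j = b 0 j - w t' j := mul_left_cancel₀ hi he2
    exact sub_right_injective he3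
  have hM_inj : Function.Injective Mt := fun t t' h => hw_inj (hM_winj t t' h)
  refine ⟨Set.range Mt, ?_, ?_, ?_⟩
  · rintro _ ⟨t, rfl⟩ _ ⟨t', rfl⟩ hne
    have hwne : w t - w t' ≠ 0 := by
      intro h
      exact hne (congrArg Mt (hw_inj (sub_eq_zero.mp h)))
    exact rowRank_eq_one_of (fun i => c i 0) (w t - w t') hu hwne _
      (by intro i j; simp [Mt, Pi.sub_apply]; ring)
  · rw [← Set.image_univ, Set.ncard_image_of_injective _ hM_inj, Set.ncard_univ,
      Nat.card_eq_fintype_card]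
    simp [Fintype.card_fun]
  · rintro _ ⟨t, rfl⟩
    exact ⟨hMrank t, hAdjA t⟩
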